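/- Let H and K be equivalent complex Hadamard matrices of order n and let 1 ≤ d ≤ n. Then for every nonnegative real number t, the number of pairs (S, T), where S and T are d-element subsets of the row indices and column indices respectively, such that the d×d submatrix of H with rows S and columns T has determinant of absolute value t, equals the corresponding number for K. Equivalently, the multiset of absolute values of d×d minors of H (counted with multiplicity over all choices of d rows and d columns) coincides with that of K; i.e., the fingerprint is invariant under equivalence. -/

import Mathlib

open Matrix

/-- `H` is a complex Hadamard matrix: unimodular entries and `H Hᴴ = n • I`. -/
def IsCHadamard {n : Type*} [Fintype n] [DecidableEq n] (H : Matrix n n ℂ) : Prop :=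
  (∀ i j, ‖H i j‖ = 1) ∧
    H * H.conjTranspose = (Fintype.card n : ℂ) • 1

/-- Equivalence of complex Hadamard matrices: `H = P₁ D₁ K D₂ P₂` with permutation
matrices `P₁, P₂` and unitary diagonal matrices `D₁, D₂`. -/
def HadEquiv {n : Type*} [Fintype n] [DecidableEq n] (H K : Matrix n n ℂ) : Prop :=
  ∃ (σ τ : Equiv.Perm n) (d₁ d₂ : n → ℂ),
    (∀ i, ‖d₁ i‖ = 1) ∧ (∀ i, ‖d₂ i‖ = 1) ∧
    H = σ.permMatrix ℂ * Matrix.diagonal d₁ * K * Matrix.diagonal d₂ * τ.permMatrix ℂ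

/-- The number of pairs `(S, T)` of `d`-element sets of row- and column indices such
that the corresponding `d × d` minor of `H` has absolute value `t`. -/
noncomputable def minorCount {n : ℕ} (H : Matrix (Fin n) (Fin n) ℂ) (d : ℕ) (t : ℝ) : ℕ :=
  Nat.card {p : Finset (Fin n) × Finset (Fin n) //
    ∃ (h₁ : p.1.card = d) (h₂ : p.2.card = d),
      ‖(Matrix.det (H.submatrix
        (fun a => (p.1.orderIsoOfFin h₁ a : Fin n))
        (fun b => (p.2.orderIsoOfFin h₂ b : Fin n))))‖ = t}

/-- Abs of determinant is invariant under re-enumeration of rows and columns with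
the same ranges. -/
lemma abs_det_submatrix_range {d n : ℕ} (M : Matrix (Fin n) (Fin n) ℂ)
    (f f' g g' : Fin d → Fin n)
    (hf : Function.Injective f) (hf' : Function.Injective f')
    (hg : Function.Injective g) (hg' : Function.Injective g')
    (hrf : Set.range f = Set.range f') (hrg : Set.range g = Set.range g') :
    ‖(M.submatrix f g).det‖ = ‖(M.submatrix f' g').det‖ := by
  let e : Fin d ≃ Fin d :=
    (Equiv.ofInjective f hf).trans ((Equiv.setCongr hrf).trans (Equiv.ofInjective f' hf').symm)
  let e' : Fin d ≃ Fin d :=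
    (Equiv.ofInjective g hg).trans ((Equiv.setCongr hrg).trans (Equiv.ofInjective g' hg').symm)
  have hfe : ∀ a, f' (e a) = f a := by
    intro a
    simp only [e, Equiv.trans_apply]
    rw [Equiv.apply_ofInjective_symm hf']
    rfl
  have hge : ∀ a, g' (e' a) = g a := by
    intro a
    simp only [e', Equiv.trans_apply]
    rw [Equiv.apply_ofInjective_symm hg']
    rfl
  have hsub : M.submatrix f g = ((M.submatrix f' g').submatrix e id).submatrix id e' := by
    ext i j
    simp [hfe, hge]
  rw [hsub, Matrix.det_permute', Matrix.det_permute]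
  simp only [norm_mul]
  have hu : ∀ (u : ℤˣ), ‖((u : ℤ) : ℂ)‖ = 1 := by
    intro u
    rcases Int.units_eq_one_or u with h | h <;> simp [h]
  rw [hu, hu, one_mul, one_mul]

lemma range_orderIsoOfFin {n d : ℕ} (S : Finset (Fin n)) (h : S.card = d) :
    Set.range (fun a => (S.orderIsoOfFin h a : Fin n)) = ↑S := by
  ext x
  constructor
  · rintro ⟨a, rfl⟩; exact (S.orderIsoOfFin h a).2
  · intro hx
    exact ⟨(S.orderIsoOfFin h).symm ⟨x, hx⟩, by simp⟩

lemma key_minor {n d : ℕ} (K : Matrix (Fin n) (Fin n) ℂ) (σ τ : Equiv.Perm (Fin n))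
    (d₁ d₂ : Fin n → ℂ)
    (h1 : ∀ i, ‖d₁ i‖ = 1) (h2 : ∀ i, ‖d₂ i‖ = 1)
    (S T : Finset (Fin n)) (hS : S.card = d) (hT : T.card = d)
    (hS' : (S.map σ.toEmbedding).card = d) (hT' : (T.map τ.symm.toEmbedding).card = d) :
    ‖((σ.permMatrix ℂ * Matrix.diagonal d₁ * K * Matrix.diagonal d₂ *
        τ.permMatrix ℂ).submatrix
        (fun a => (S.orderIsoOfFin hS a : Fin n))
        (fun b => (T.orderIsoOfFin hT b : Fin n))).det‖
      = ‖(K.submatrix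
        (fun a => ((S.map σ.toEmbedding).orderIsoOfFin hS' a : Fin n))
        (fun b => ((T.map τ.symm.toEmbedding).orderIsoOfFin hT' b : Fin n))).det‖ := by
  set H := σ.permMatrix ℂ * Matrix.diagonal d₁ * K * Matrix.diagonal d₂ * τ.permMatrix ℂ with hH
  set fS : Fin d → Fin n := fun a => (S.orderIsoOfFin hS a : Fin n) with hfS
  set gT : Fin d → Fin n := fun b => (T.orderIsoOfFin hT b : Fin n) with hgT
  have hent : ∀ i j, H i j = d₁ (σ i) * K (σ i) (τ.symm j) * d₂ (τ.symm j) := by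
    intro i j
    have hassoc : H = σ.toPEquiv.toMatrix *
        (Matrix.diagonal d₁ * K * Matrix.diagonal d₂) * τ.toPEquiv.toMatrix := by
      rw [hH]; simp only [Equiv.Perm.permMatrix]; noncomm_ring
    rw [hassoc, PEquiv.toMatrix_toPEquiv_mul, PEquiv.mul_toMatrix_toPEquiv]
    simp [Matrix.mul_diagonal, Matrix.diagonal_mul]
  have hinj_fS : Function.Injective fS := fun a b h =>
    (S.orderIsoOfFin hS).injective (Subtype.ext h)
  have hinj_gT : Function.Injective gT := fun a b h =>
    (T.orderIsoOfFin hT).injective (Subtype.ext h)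
  have hdec : H.submatrix fS gT =
      Matrix.diagonal (fun a => d₁ (σ (fS a))) *
        (K.submatrix (fun a => σ (fS a)) (fun b => τ.symm (gT b))) *
        Matrix.diagonal (fun b => d₂ (τ.symm (gT b))) := by
    ext i j
    simp only [Matrix.submatrix_apply, Matrix.mul_diagonal, Matrix.diagonal_mul]
    rw [hent]
  have habs1 : ‖(H.submatrix fS gT).det‖ =
      ‖(K.submatrix (fun a => σ (fS a)) (fun b => τ.symm (gT b))).det‖ := by
    rw [hdec, Matrix.det_mul, Matrix.det_mul, Matrix.det_diagonal, Matrix.det_diagonal]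
    simp only [norm_mul, norm_prod]
    rw [Finset.prod_congr rfl (fun i _ => h1 _), Finset.prod_congr rfl (fun i _ => h2 _)]
    simp
  rw [habs1]
  refine abs_det_submatrix_range K _ _ _ _ ?_ ?_ ?_ ?_ ?_ ?_
  · exact fun a b h => hinj_fS (σ.injective h)
  · exact fun a b h => ((S.map σ.toEmbedding).orderIsoOfFin hS').injective (Subtype.ext h)
  · exact fun a b h => hinj_gT (τ.symm.injective h)
  · exact fun a b h => ((T.map τ.symm.toEmbedding).orderIsoOfFin hT').injective (Subtype.ext h)
  · have : (fun a => σ (fS a)) = ⇑σ ∘ fS := rfl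
    rw [this, Set.range_comp, hfS, range_orderIsoOfFin, range_orderIsoOfFin]
    ext x; simp
  · have : (fun b => τ.symm (gT b)) = ⇑τ.symm ∘ gT := rfl
    rw [this, Set.range_comp, hgT, range_orderIsoOfFin, range_orderIsoOfFin]
    ext x; simp

theorem stmt13 (n : ℕ) (H K : Matrix (Fin n) (Fin n) ℂ)
    (hH : IsCHadamard H) (hK : IsCHadamard K) (heq : HadEquiv H K)
    (d : ℕ) (hd1 : 1 ≤ d) (hdn : d ≤ n) :
    ∀ t : ℝ, 0 ≤ t → minorCount H d t = minorCount K d t := by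
  obtain ⟨σ, τ, d₁, d₂, h1, h2, hHK⟩ := heq
  intro t ht
  unfold minorCount
  refine Nat.card_congr (Equiv.subtypeEquiv
    (Equiv.prodCongr σ.finsetCongr τ.symm.finsetCongr) ?_)
  rintro ⟨S, T⟩
  simp only [Equiv.prodCongr_apply, Prod.map, Equiv.finsetCongr_apply]
  constructor
  · rintro ⟨hS, hT, habs⟩
    have hS' : (S.map σ.toEmbedding).card = d := by simpa using hS
    have hT' : (T.map τ.symm.toEmbedding).card = d := by simpa using hT
    refine ⟨hS', hT', ?_⟩
    rw [← habs, hHK]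
    exact (key_minor K σ τ d₁ d₂ h1 h2 S T hS hT hS' hT').symm
  · rintro ⟨hS', hT', habs⟩
    have hS : S.card = d := by simpa using hS'
    have hT : T.card = d := by simpa using hT'
    refine ⟨hS, hT, ?_⟩
    rw [← habs, hHK]
    exact key_minor K σ τ d₁ d₂ h1 h2 S T hS hT hS' hT'
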